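/- (Beatty's theorem) Let r > 1 be an irrational real number and let s = r/(r-1). Then the Beatty sequences B_r = {⌊n·r⌋ : n a positive integer} and B_s = {⌊n·s⌋ : n a positive integer} partition the set of positive integers: every positive integer belongs to exactly one of the two sets. -/

import Mathlib

open scoped symmDiff

/-- Beatty's theorem: for irrational `r > 1` and `s = r/(r-1)`, the Beatty sequences
`B_r = {⌊n·r⌋ : n ≥ 1}` and `B_s = {⌊n·s⌋ : n ≥ 1}` partition the positive integers. -/
theorem beatty_partition (r : ℝ) (hr_irr : Irrational r) (hr : 1 < r) (s : ℝ)
    (hs : s = r / (r - 1)) :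
    ∀ k : ℕ, 0 < k →
      Xor' (∃ n : ℕ, 0 < n ∧ (k : ℤ) = ⌊(n : ℝ) * r⌋)
           (∃ n : ℕ, 0 < n ∧ (k : ℤ) = ⌊(n : ℝ) * s⌋) := by
  intro k hk
  have hrs : r.HolderConjugate s := (Real.holderConjugate_iff_eq_conjExponent hr).2 hs
  have hmem : (k : ℤ) ∈ {n : ℤ | 0 < n} := by simpa using hk
  rw [← hr_irr.beattySeq_symmDiff_beattySeq_pos hrs, Set.mem_symmDiff] at hmem
  have conv : ∀ t : ℝ, (∃ m : ℤ, m > 0 ∧ beattySeq t m = (k : ℤ)) ↔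
      (∃ n : ℕ, 0 < n ∧ (k : ℤ) = ⌊(n : ℝ) * t⌋) := by
    intro t
    constructor
    · rintro ⟨m, hm, hmk⟩
      refine ⟨m.toNat, by omega, ?_⟩
      rw [← hmk, beattySeq]
      congr 2
      norm_cast
      omega
    · rintro ⟨n, hn, hnk⟩
      refine ⟨n, by exact_mod_cast hn, ?_⟩
      rw [beattySeq]; push_cast; omega
  rcases hmem with ⟨h1, h2⟩ | ⟨h1, h2⟩
  · exact Or.inl ⟨(conv r).1 h1, fun h => h2 ((conv s).2 h)⟩
  · exact Or.inr ⟨(conv s).1 h1, fun h => h2 ((conv r).2 h)⟩
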